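/- For λ > −1, t ∈ ℝ and integer m ≥ 2, the first moment of the generalised higher order Freud weight admits the finite partition into hypergeometric series: μ₀(t;λ,m) = ∫_{−∞}^{∞} |x|^{2λ+1} exp(t x² − x^{2m}) dx = (1/m) Σ_{j=0}^{m−1} Γ((λ+j+1)/m) (t^j/j!) Σ_{k=0}^{∞} [ ((λ+j+1)/m)_k / ( ((j+1)/m)_k ((j+2)/m)_k ⋯ ((j+m)/m)_k ) ] (t/m)^{mk}, where (a)_k = a(a+1)⋯(a+k−1) is the Pochhammer symbol and each inner series converges absolutely for every t ∈ ℝ. -/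

import Mathlib

open MeasureTheory Real Polynomial

open Set
open scoped ENNReal NNReal

private lemma aux_gamma_add_nat {a : ℝ} (ha : 0 < a) (k : ℕ) :
    Real.Gamma (a + k) = Real.Gamma a * (ascPochhammer ℝ k).eval a := by
  induction k with
  | zero => simp
  | succ k ih =>
    have h1 : a + ((k : ℝ) + 1) = (a + k) + 1 := by ring
    push_cast
    rw [h1, Real.Gamma_add_one (by positivity), ih, ascPochhammer_succ_eval]
    ring

private lemma aux_factorial_add (n p : ℕ) :
    ((n + p).factorial : ℝ) = (n.factorial : ℝ) * ∏ i ∈ Finset.range p, ((n : ℝ) + 1 + i) := by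
  induction p with
  | zero => simp
  | succ p ih =>
    rw [Finset.prod_range_succ, ← mul_assoc, ← ih, ← Nat.add_assoc, Nat.factorial_succ]
    push_cast
    ring

private lemma aux_factorial_split (m j k : ℕ) (hm : 0 < m) :
    ((j + m * k).factorial : ℝ) =
      (j.factorial : ℝ) * (m : ℝ) ^ (m * k) *
        ∏ i ∈ Finset.range m, (ascPochhammer ℝ k).eval (((j : ℝ) + 1 + i) / m) := by
  have hm' : (0:ℝ) < m := by exact_mod_cast hm
  induction k with
  | zero => simp
  | succ k ih =>
    have h1 : j + m * (k+1) = (j + m * k) + m := by ring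
    rw [h1, aux_factorial_add, ih]
    have h2 : ∀ i ∈ Finset.range m,
        (ascPochhammer ℝ (k+1)).eval (((j:ℝ)+1+i)/m)
          = (ascPochhammer ℝ k).eval (((j:ℝ)+1+i)/m) * ((((j:ℝ) + m*k) + 1 + i) / m) := by
      intro i hi
      rw [ascPochhammer_succ_eval]
      congr 1
      field_simp
      ring
    have h3 : ∀ i ∈ Finset.range m,
        (((j + m*k : ℕ) : ℝ) + 1 + i) = (m:ℝ) * ((((j:ℝ) + m*k) + 1 + i) / m) := by
      intro i hi
      push_cast
      field_simp
    rw [Finset.prod_congr rfl h3, Finset.prod_mul_distrib, Finset.prod_const,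
      Finset.prod_congr rfl h2, Finset.prod_mul_distrib, Finset.card_range]
    rw [show m * (k+1) = m * k + m by ring, pow_add]
    ring

private lemma aux_key_bound {m : ℕ} (hm : 2 ≤ m) (s : ℝ) {u : ℝ} (hu : 0 ≤ u) :
    s * u ≤ u ^ m / 2 + |s| * (2 * |s| + 1) := by
  have hs0 : 0 ≤ |s| := abs_nonneg s
  have hs1 : s ≤ |s| := le_abs_self s
  rcases le_or_gt u (2 * |s| + 1) with h | h
  · have h1 : s * u ≤ |s| * (2 * |s| + 1) := by nlinarith
    have h2 : 0 ≤ u ^ m / 2 := by positivity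
    linarith
  · have hu1 : (1:ℝ) ≤ u := by linarith
    have h2 : u ^ 2 ≤ u ^ m := pow_le_pow_right₀ hu1 hm
    have h3 : s * u ≤ u ^ 2 / 2 := by nlinarith
    have hc : 0 ≤ |s| * (2 * |s| + 1) := by positivity
    linarith

private lemma aux_integrable_comp_abs {f : ℝ → ℝ}
    (hf : IntegrableOn (fun x => f |x|) (Ioi (0:ℝ))) :
    Integrable fun x => f |x| := by
  have int_Iic : IntegrableOn (fun x ↦ f |x|) (Iic 0) := by
    rw [← Measure.map_neg_eq_self (volume : Measure ℝ)]
    have hemb : MeasurableEmbedding fun x : ℝ => -x :=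
      (Homeomorph.neg ℝ).measurableEmbedding
    rw [hemb.integrableOn_map_iff]
    simp_rw [Function.comp_def, abs_neg, neg_preimage, neg_Iic, neg_zero]
    exact (integrableOn_Ici_iff_integrableOn_Ioi).mpr hf
  have h := int_Iic.union hf
  rwa [Iic_union_Ioi, integrableOn_univ] at h

private lemma aux_measurable (lam s : ℝ) (m n : ℕ) :
    Measurable fun u : ℝ => u ^ (2*lam+1) * u ^ (2*n) * Real.exp (s * u^2 - u ^ (2*m)) := by
  fun_prop

private lemma aux_integrable (m : ℕ) (hm : 2 ≤ m) {lam : ℝ} (hlam : -1 < lam) (s : ℝ) (n : ℕ) :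
    Integrable fun x : ℝ =>
      |x| ^ (2*lam+1) * |x| ^ (2*n) * Real.exp (s * |x|^2 - |x| ^ (2*m)) := by
  apply aux_integrable_comp_abs
    (f := fun u : ℝ => u ^ (2*lam+1) * u ^ (2*n) * Real.exp (s * u^2 - u ^ (2*m)))
  have hmajor : IntegrableOn
      (fun x : ℝ => Real.exp (|s| * (2*|s|+1)) *
        (x ^ (2*lam+1+2*n) * Real.exp (-(1/2) * x ^ ((2*m : ℕ) : ℝ)))) (Ioi 0) := by
    apply Integrable.const_mul
    apply integrableOn_rpow_mul_exp_neg_mul_rpow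
    · have hn := Nat.cast_nonneg (α := ℝ) n; push_cast; linarith
    · exact_mod_cast (by omega : (1:ℕ) ≤ 2*m)
    · norm_num
  refine Integrable.mono hmajor ?_ ?_
  · exact ((aux_measurable lam s m n).comp measurable_abs).aestronglyMeasurable.restrict
  · filter_upwards [ae_restrict_mem measurableSet_Ioi] with x hx
    have hx0 : (0:ℝ) < x := hx
    have habs : |x| = x := abs_of_pos hx0
    rw [habs]
    have hb := aux_key_bound hm s (sq_nonneg x)
    have hxm : x ^ (2*m) = (x^2) ^ m := by rw [pow_mul]
    have h1 : Real.exp (s * x^2 - x ^ (2*m)) ≤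
        Real.exp (|s| * (2*|s|+1)) * Real.exp (-(1/2) * x ^ ((2*m : ℕ) : ℝ)) := by
      rw [← Real.exp_add, Real.exp_le_exp, Real.rpow_natCast]
      have : -(1/2) * x ^ (2*m) = x^(2*m) / 2 - x ^ (2*m) := by ring
      rw [this, hxm]
      linarith [hb]
    have h2 : x ^ (2*lam+1) * x ^ (2*n) = x ^ (2*lam+1+2*n) := by
      rw [← Real.rpow_natCast x (2*n), ← Real.rpow_add hx0]
      push_cast; ring_nf
    rw [Real.norm_eq_abs, Real.norm_eq_abs, abs_of_nonneg, abs_of_nonneg]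
    · calc x ^ (2*lam+1) * x ^ (2*n) * Real.exp (s * x^2 - x ^ (2*m))
          ≤ x ^ (2*lam+1) * x ^ (2*n) *
            (Real.exp (|s| * (2*|s|+1)) * Real.exp (-(1/2) * x ^ ((2*m : ℕ) : ℝ))) := by
            exact mul_le_mul_of_nonneg_left h1 (by positivity)
        _ = _ := by rw [h2]; ring
    · positivity
    · positivity

private lemma aux_habs2 (x : ℝ) (k : ℕ) : |x| ^ (2*k) = x ^ (2*k) := by
  rw [pow_mul, pow_mul, sq_abs]

private lemma aux_moment (m : ℕ) (hm : 2 ≤ m) {lam : ℝ} (hlam : -1 < lam) (n : ℕ) :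
    (∫ x : ℝ, |x| ^ (2*lam+1) * |x| ^ (2*n) * Real.exp (-(|x| ^ (2*m)))) =
      (1/(m:ℝ)) * Real.Gamma ((lam + 1 + n)/m) := by
  have hm0 : (0:ℝ) < m := by positivity
  have hca := integral_comp_abs
    (f := fun u : ℝ => u ^ (2*lam+1) * u ^ (2*n) * Real.exp (-(u ^ (2*m))))
  rw [hca]
  have hcg : ∀ x ∈ Ioi (0:ℝ),
      x ^ (2*lam+1) * x ^ (2*n) * Real.exp (-(x ^ (2*m)))
        = x ^ (2*lam+1+2*n) * Real.exp (-x ^ ((2*m : ℕ) : ℝ)) := by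
    intro x hx
    have hx0 : (0:ℝ) < x := hx
    rw [Real.rpow_natCast x (2*m)]
    congr 1
    rw [← Real.rpow_natCast x (2*n), ← Real.rpow_add hx0]
    norm_num
  rw [setIntegral_congr_fun measurableSet_Ioi hcg,
    integral_rpow_mul_exp_neg_rpow (by positivity)
      (by have := Nat.cast_nonneg (α := ℝ) n; push_cast; linarith)]
  have harg : (2*lam+1+2*(n:ℝ)+1) / ((2*m : ℕ) : ℝ) = (lam + 1 + n)/m := by
    push_cast
    rw [div_eq_div_iff (by positivity) (by positivity)]
    ring
  rw [harg]
  push_cast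
  field_simp

/-- For `λ > −1`, `t ∈ ℝ` and integer `m ≥ 2`, the first moment of the
generalised higher order Freud weight admits the finite partition into hypergeometric series:
`μ₀(t;λ,m) = (1/m) Σ_{j=0}^{m−1} Γ((λ+j+1)/m) (t^j/j!)
  Σ_{k=0}^∞ ((λ+j+1)/m)_k / (((j+1)/m)_k ⋯ ((j+m)/m)_k) (t/m)^{mk}`,
each inner series converging absolutely for every `t`. -/
theorem first_moment_hypergeometric (m : ℕ) (hm : 2 ≤ m) (lam t : ℝ) (hlam : -1 < lam) :
    (∀ j < m, Summable (fun k : ℕ =>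
      |(ascPochhammer ℝ k).eval ((lam + (j : ℝ) + 1) / (m : ℝ)) /
          (∏ i ∈ Finset.range m,
            (ascPochhammer ℝ k).eval (((j : ℝ) + 1 + (i : ℝ)) / (m : ℝ))) *
        (t / (m : ℝ)) ^ (m * k)|)) ∧
    (∫ x : ℝ, |x| ^ (2 * lam + 1) * Real.exp (t * x ^ 2 - x ^ (2 * m))) =
      (1 / (m : ℝ)) *
        ∑ j ∈ Finset.range m,
          Real.Gamma ((lam + (j : ℝ) + 1) / (m : ℝ)) * (t ^ j / (Nat.factorial j : ℝ)) *
            ∑' k : ℕ,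
              (ascPochhammer ℝ k).eval ((lam + (j : ℝ) + 1) / (m : ℝ)) /
                  (∏ i ∈ Finset.range m,
                    (ascPochhammer ℝ k).eval (((j : ℝ) + 1 + (i : ℝ)) / (m : ℝ))) *
                (t / (m : ℝ)) ^ (m * k) := by
  have hm0' : 0 < m := by omega
  have hm0 : (0:ℝ) < m := by exact_mod_cast hm0'
  haveI : NeZero m := ⟨by omega⟩
  set g : ℕ → ℝ → ℝ := fun n x => (t^n / n.factorial) *
    (|x| ^ (2*lam+1) * |x| ^ (2*n) * Real.exp (-(|x| ^ (2*m)))) with hg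
  set A : ℕ → ℝ := fun n => (t^n / n.factorial) *
    ((1/(m:ℝ)) * Real.Gamma ((lam + 1 + n)/m)) with hA
  have hGpos : ∀ n : ℕ, 0 < Real.Gamma ((lam + 1 + n)/m) := by
    intro n
    apply Real.Gamma_pos_of_pos
    have := Nat.cast_nonneg (α := ℝ) n
    apply div_pos (by linarith) hm0
  -- integrability of each g n
  have hint2base : ∀ n : ℕ, Integrable
      (fun x : ℝ => |x| ^ (2*lam+1) * |x| ^ (2*n) * Real.exp (-(|x| ^ (2*m)))) := by
    intro n
    have h := aux_integrable m hm hlam 0 n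
    simpa using h
  have hint2 : ∀ n, Integrable (g n) := fun n => (hint2base n).const_mul _
  have hmeas : ∀ n, AEStronglyMeasurable (g n) volume := fun n => (hint2 n).1
  -- value of each integral
  have hintGen : ∀ (s : ℝ) (n : ℕ),
      (∫ x : ℝ, (s^n / n.factorial) *
        (|x| ^ (2*lam+1) * |x| ^ (2*n) * Real.exp (-(|x| ^ (2*m)))))
      = (s^n / n.factorial) * ((1/(m:ℝ)) * Real.Gamma ((lam + 1 + n)/m)) := by
    intro s n
    rw [integral_const_mul, aux_moment m hm hlam n]
  -- pointwise HasSum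
  have hptGen : ∀ (s : ℝ) (x : ℝ), HasSum
      (fun n : ℕ => (s^n / n.factorial) *
        (|x| ^ (2*lam+1) * |x| ^ (2*n) * Real.exp (-(|x| ^ (2*m)))))
      (|x| ^ (2*lam+1) * Real.exp (s * x^2 - x ^ (2*m))) := by
    intro s x
    have h0 := NormedSpace.expSeries_div_hasSum_exp (s * x^2)
    rw [← Real.exp_eq_exp_ℝ] at h0
    have h1 := h0.mul_left (|x| ^ (2*lam+1) * Real.exp (-(|x| ^ (2*m))))
    convert h1 using 1
    · rfl
    · funext n
      have e1 : (s * x^2)^n = s^n * |x|^(2*n) := by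
        rw [mul_pow, pow_mul, sq_abs]
      rw [e1]
      ring
    · rw [mul_assoc, ← Real.exp_add, aux_habs2 x m]
      congr 1
      ring
  have habsg : ∀ n (x : ℝ), |g n x| = (|t|^n / n.factorial) *
      (|x| ^ (2*lam+1) * |x| ^ (2*n) * Real.exp (-(|x| ^ (2*m)))) := by
    intro n x
    rw [hg]
    simp only
    rw [abs_mul, abs_div, abs_pow, Nat.abs_cast,
      abs_of_nonneg (show (0:ℝ) ≤ |x| ^ (2*lam+1) * |x| ^ (2*n) *
        Real.exp (-(|x| ^ (2*m))) by positivity)]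
  -- finiteness of the tsum of lintegrals
  have hI' : Integrable (fun x : ℝ => |x| ^ (2*lam+1) * Real.exp (|t| * x^2 - x ^ (2*m))) := by
    have h := aux_integrable m hm hlam |t| 0
    simp only [mul_zero, pow_zero, mul_one, sq_abs, aux_habs2] at h
    exact h
  have hfin : (∑' n : ℕ, ∫⁻ x, ‖g n x‖₊ ∂volume) ≠ ⊤ := by
    rw [← lintegral_tsum (fun n => (hmeas n).nnnorm.aemeasurable.coe_nnreal_ennreal)]
    have hx : ∀ x : ℝ, (∑' n : ℕ, (‖g n x‖₊ : ℝ≥0∞))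
        = ENNReal.ofReal (|x| ^ (2*lam+1) * Real.exp (|t| * x^2 - x ^ (2*m))) := by
      intro x
      have h := (hptGen |t| x)
      have h2 : HasSum (fun n => |g n x|)
          (|x| ^ (2*lam+1) * Real.exp (|t| * x^2 - x ^ (2*m))) := by
        simpa only [← habsg] using h
      rw [← h2.tsum_eq, ENNReal.ofReal_tsum_of_nonneg (fun n => abs_nonneg _) h2.summable]
      exact tsum_congr fun n => by
        exact (Real.enorm_eq_ofReal_abs _)
    rw [lintegral_congr hx]
    exact hI'.lintegral_lt_top.ne
  -- the integral equals the tsum of A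
  have hLHS : (∫ x : ℝ, |x| ^ (2 * lam + 1) * Real.exp (t * x ^ 2 - x ^ (2 * m)))
      = ∑' n : ℕ, A n := by
    have h1 : (fun x : ℝ => |x| ^ (2*lam+1) * Real.exp (t * x^2 - x ^ (2*m)))
        = fun x => ∑' n, g n x := funext fun x => ((hptGen t x).tsum_eq).symm
    rw [h1, integral_tsum (fun n => hmeas n) hfin]
    exact tsum_congr fun n => hintGen t n
  -- summability of |A|
  have hAb : ∀ n : ℕ, |A n| = (|t|^n / n.factorial) *
      ((1/(m:ℝ)) * Real.Gamma ((lam + 1 + n)/m)) := by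
    intro n
    rw [hA]
    simp only
    rw [abs_mul, abs_div, abs_pow, Nat.abs_cast,
      abs_of_nonneg (show (0:ℝ) ≤ (1/(m:ℝ)) * Real.Gamma ((lam + 1 + n)/m) by
        have := hGpos n; positivity)]
  have hAbsSummable : Summable fun n : ℕ => |A n| := by
    have h2 : ∀ n : ℕ, (∫⁻ x, ‖g n x‖₊ ∂volume) = ENNReal.ofReal |A n| := by
      intro n
      have hi : Integrable (fun x => |g n x|) := (hint2 n).abs
      have hv : (∫ x, |g n x|) = |A n| := by
        rw [integral_congr_ae (Filter.Eventually.of_forall (habsg n)), hintGen |t| n, hAb n]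
      rw [← hv, ofReal_integral_eq_lintegral_ofReal hi
        (Filter.Eventually.of_forall fun x => abs_nonneg _)]
      exact lintegral_congr fun x => by
        exact Real.enorm_eq_ofReal_abs _
    simp only [h2] at hfin
    have h4 := ENNReal.summable_toReal hfin
    convert h4 with n
    rw [ENNReal.toReal_ofReal (abs_nonneg _)]
  have hASummable : Summable A := hAbsSummable.of_abs
  -- positivity facts
  have hjpos : ∀ j : ℕ, 0 < (lam + (j:ℝ) + 1) / m := by
    intro j
    have := Nat.cast_nonneg (α := ℝ) j
    exact div_pos (by linarith) hm0
  have hprodpos : ∀ j k : ℕ,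
      0 < ∏ i ∈ Finset.range m, (ascPochhammer ℝ k).eval (((j:ℝ) + 1 + i) / m) := by
    intro j k
    refine Finset.prod_pos fun i _ => ascPochhammer_pos k _ ?_
    have h1 := Nat.cast_nonneg (α := ℝ) j
    have h2 := Nat.cast_nonneg (α := ℝ) i
    exact div_pos (by linarith) hm0
  -- the key pointwise identity
  have hkey : ∀ j k : ℕ, A (k * m + j) =
      ((1/(m:ℝ)) * Real.Gamma ((lam + (j:ℝ) + 1) / m) * (t^j / j.factorial)) *
        ((ascPochhammer ℝ k).eval ((lam + (j:ℝ) + 1) / m) /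
          (∏ i ∈ Finset.range m, (ascPochhammer ℝ k).eval (((j:ℝ) + 1 + i) / m)) *
          (t/(m:ℝ))^(m*k)) := by
    intro j k
    have hGamma : Real.Gamma ((lam + 1 + ((k*m+j : ℕ) : ℝ))/m)
        = Real.Gamma ((lam + (j:ℝ) + 1)/m) *
          (ascPochhammer ℝ k).eval ((lam + (j:ℝ) + 1)/m) := by
      rw [show (lam + 1 + ((k*m+j : ℕ) : ℝ))/m = (lam + (j:ℝ) + 1)/m + k by
        push_cast; field_simp; ring]
      exact aux_gamma_add_nat (hjpos j) k
    have hfact : (((k*m+j).factorial : ℕ) : ℝ) = (j.factorial : ℝ) * (m:ℝ)^(m*k) *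
        ∏ i ∈ Finset.range m, (ascPochhammer ℝ k).eval (((j:ℝ) + 1 + i) / m) := by
      rw [show k*m+j = j+m*k by ring]
      exact aux_factorial_split m j k hm0'
    rw [hA]
    simp only
    rw [hGamma, hfact, show k*m+j = j+m*k by ring, pow_add, div_pow]
    have hp := hprodpos j k
    have hG := Real.Gamma_pos_of_pos (hjpos j)
    have hfac : ((j.factorial : ℕ) : ℝ) ≠ 0 := by
      exact_mod_cast j.factorial_ne_zero
    have hmpow : (m:ℝ)^(m*k) ≠ 0 := by positivity
    field_simp
  -- part 1 : summability of the inner series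
  have part1 : ∀ j < m, Summable (fun k : ℕ =>
      |(ascPochhammer ℝ k).eval ((lam + (j : ℝ) + 1) / (m : ℝ)) /
          (∏ i ∈ Finset.range m,
            (ascPochhammer ℝ k).eval (((j : ℝ) + 1 + (i : ℝ)) / (m : ℝ))) *
        (t / (m : ℝ)) ^ (m * k)|) := by
    intro j hj
    by_cases ht : t = 0
    · subst ht
      apply summable_of_ne_finset_zero (s := {0})
      intro k hk
      have hmk : m * k ≠ 0 := by
        simp only [Finset.mem_singleton] at hk
        positivity
      rw [zero_div, zero_pow hmk, mul_zero, abs_zero]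
    · have hCne : (1/(m:ℝ)) * Real.Gamma ((lam + (j:ℝ) + 1) / m) *
          (t^j / (j.factorial : ℝ)) ≠ 0 := by
        apply mul_ne_zero (mul_ne_zero (by positivity)
          (ne_of_gt (Real.Gamma_pos_of_pos (hjpos j))))
        apply div_ne_zero (pow_ne_zero _ ht)
        exact_mod_cast j.factorial_ne_zero
      have hinj : Function.Injective (fun k : ℕ => k * m + j) := by
        intro k1 k2 h
        simp only at h
        exact Nat.eq_of_mul_eq_mul_right hm0' (Nat.add_right_cancel h)
      have hs1 : Summable fun k : ℕ => |A (k * m + j)| :=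
        hAbsSummable.comp_injective hinj
      have hs2 := hs1.mul_left
        |(1/(m:ℝ)) * Real.Gamma ((lam + (j:ℝ) + 1) / m) * (t^j / (j.factorial : ℝ))|⁻¹
      apply hs2.congr
      intro k
      rw [hkey j k,
        abs_mul ((1/(m:ℝ)) * Real.Gamma ((lam + (j:ℝ) + 1) / m) * (t^j / (j.factorial : ℝ))),
        ← mul_assoc, inv_mul_cancel₀ (abs_ne_zero.2 hCne), one_mul]
  refine ⟨part1, ?_⟩
  -- reindex the sum
  let E : Fin m × ℕ ≃ ℕ := (Equiv.prodComm (Fin m) ℕ).trans (Nat.divModEquiv m).symm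
  have hsumE : Summable fun q : Fin m × ℕ => A (E q) :=
    hASummable.comp_injective E.injective
  have h3 : ∑' n, A n = ∑ j ∈ Finset.range m, ∑' k : ℕ, A (k * m + j) := by
    rw [← E.tsum_eq A, hsumE.tsum_prod' (fun j => hsumE.prod_factor j), tsum_fintype]
    exact Fin.sum_univ_eq_sum_range (fun j => ∑' k : ℕ, A (k * m + j)) m
  rw [hLHS, h3, Finset.mul_sum]
  refine Finset.sum_congr rfl fun j hj => ?_
  have h5 : ∑' k : ℕ, A (k * m + j) =
      ((1/(m:ℝ)) * Real.Gamma ((lam + (j:ℝ) + 1) / m) * (t^j / j.factorial)) *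
      ∑' k : ℕ,
        ((ascPochhammer ℝ k).eval ((lam + (j:ℝ) + 1) / m) /
          (∏ i ∈ Finset.range m, (ascPochhammer ℝ k).eval (((j:ℝ) + 1 + i) / m)) *
          (t/(m:ℝ))^(m*k)) := by
    rw [← tsum_mul_left]
    exact tsum_congr fun k => hkey j k
  rw [h5]
  ring
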